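/- Every KL-simple single term formula — a formula of the form K_1 X L_2 Y α in which the epistemic operators correspond to pairwise distinct agents, where X is a (possibly empty) sequence of K operators and Y a (possibly empty) sequence of K and L operators, and α is a propositional atom — is unsuccessful in S5. -/

import Mathlib

/-- Formulas of public announcement logic over agent type `A` and atoms `P`. -/
inductive Form (A P : Type) : Type where
  | atom : P → Form A P
  | neg  : Form A P → Form A P
  | and  : Form A P → Form A P → Form A P
  | or   : Form A P → Form A P → Form A P
  | K    : A → Form A P → Form A P
  | ann  : Form A P → Form A P → Form A P

/-- The possibility operator `L_a φ := ¬ K_a ¬ φ`. -/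
def Form.L {A P : Type} (a : A) (φ : Form A P) : Form A P := .neg (.K a (.neg φ))

/-- An S5 epistemic model: worlds, an equivalence relation per agent, a valuation. -/
structure Model (A P : Type) where
  W : Type
  R : A → W → W → Prop
  equiv : ∀ a, Equivalence (R a)
  V : P → W → Prop

/-- Restriction (submodel) of a model to the worlds satisfying `S`. -/
def Model.restrict {A P : Type} (M : Model A P) (S : M.W → Prop) : Model A P where
  W := {w : M.W // S w}
  R a u v := M.R a u.1 v.1
  equiv a := ⟨fun _ => (M.equiv a).refl _, fun h => (M.equiv a).symm h,
              fun h h' => (M.equiv a).trans h h'⟩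
  V p w := M.V p w.1

/-- Truth of a formula at a world of a model. -/
def sat {A P : Type} : (M : Model A P) → M.W → Form A P → Prop
  | M, w, .atom p => M.V p w
  | M, w, .neg φ => ¬ sat M w φ
  | M, w, .and φ ψ => sat M w φ ∧ sat M w ψ
  | M, w, .or φ ψ => sat M w φ ∨ sat M w ψ
  | M, w, .K a φ => ∀ v, M.R a w v → sat M v φ
  | M, w, .ann φ ψ => ∀ h : sat M w φ, sat (M.restrict (fun v => sat M v φ)) ⟨w, h⟩ ψ

/-- A formula is successful iff it remains true after being announced. -/
def successful {A P : Type} (φ : Form A P) : Prop :=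
  ∀ (M : Model A P) (w : M.W) (h : sat M w φ),
    sat (M.restrict (fun v => sat M v φ)) ⟨w, h⟩ φ

/-- Purely propositional formulas (no epistemic or announcement operators). -/
def Form.isProp {A P : Type} : Form A P → Prop
  | .atom _ => True
  | .neg φ => φ.isProp
  | .and φ ψ => φ.isProp ∧ ψ.isProp
  | .or φ ψ => φ.isProp ∧ ψ.isProp
  | .K _ _ => False
  | .ann _ _ => False

/-- Prefix a formula with a sequence of `K` operators. -/
def Kseq {A P : Type} (l : List A) (φ : Form A P) : Form A P := l.foldr .K φ

/-- Prefix a formula with a sequence of `L` operators. -/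
def Lseq {A P : Type} (l : List A) (φ : Form A P) : Form A P := l.foldr Form.L φ

/-- Prefix a formula with a sequence of epistemic operators:
`(a, true)` stands for `K_a` and `(a, false)` for `L_a`. -/
def Eseq {A P : Type} (l : List (A × Bool)) (φ : Form A P) : Form A P :=
  l.foldr (fun e ψ => if e.2 then .K e.1 ψ else Form.L e.1 ψ) φ


section Aux

variable {A P : Type}

lemma sat_K_iff (M : Model A P) (c : A) (φ : Form A P) (w : M.W)
    (h : ∀ u v : M.W, M.R c u v → u = v) :
    sat M w (.K c φ) ↔ sat M w φ := by
  constructor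
  · intro hk; exact hk w ((M.equiv c).refl w)
  · intro hw v hr; rcases h w v hr with rfl; exact hw

lemma sat_L_iff (M : Model A P) (c : A) (φ : Form A P) (w : M.W)
    (h : ∀ u v : M.W, M.R c u v → u = v) :
    sat M w (Form.L c φ) ↔ sat M w φ := by
  show (¬ ∀ v, M.R c w v → ¬ sat M v φ) ↔ _
  constructor
  · intro hn
    by_contra hw
    exact hn (fun v hr hv => hw (by rcases h w v hr with rfl; exact hv))
  · intro hw hn
    exact hn w ((M.equiv c).refl w) hw

lemma sat_Kseq_iff (M : Model A P) (l : List A) (φ : Form A P) (w : M.W)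
    (h : ∀ c ∈ l, ∀ u v : M.W, M.R c u v → u = v) :
    sat M w (Kseq l φ) ↔ sat M w φ := by
  induction l with
  | nil => exact Iff.rfl
  | cons c l ih =>
    have h1 : ∀ u v : M.W, M.R c u v → u = v := h c List.mem_cons_self
    have h2 : ∀ c' ∈ l, ∀ u v : M.W, M.R c' u v → u = v :=
      fun c' hc' => h c' (List.mem_cons_of_mem _ hc')
    show sat M w (.K c (Kseq l φ)) ↔ _
    rw [sat_K_iff M c _ w h1, ih h2]

lemma sat_Eseq_iff (M : Model A P) (l : List (A × Bool)) (φ : Form A P) (w : M.W)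
    (h : ∀ e ∈ l, ∀ u v : M.W, M.R e.1 u v → u = v) :
    sat M w (Eseq l φ) ↔ sat M w φ := by
  induction l with
  | nil => exact Iff.rfl
  | cons e l ih =>
    have h1 : ∀ u v : M.W, M.R e.1 u v → u = v := h e List.mem_cons_self
    have h2 : ∀ e' ∈ l, ∀ u v : M.W, M.R e'.1 u v → u = v :=
      fun e' he' => h e' (List.mem_cons_of_mem _ he')
    show sat M w (if e.2 then .K e.1 (Eseq l φ) else Form.L e.1 (Eseq l φ)) ↔ _
    rcases e with ⟨c, _ | _⟩
    · simp only [Bool.false_eq_true, if_false]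
      rw [sat_L_iff M c _ w h1, ih h2]
    · simp only [if_true]
      rw [sat_K_iff M c _ w h1, ih h2]

/-- The countermodel: three worlds 0,1,2; agent `a` identifies 1 and 2,
agent `b` identifies 0 and 1, every other agent has the identity relation;
every atom is true exactly at world 1. -/
def cModel (A P : Type) (a b : A) (hab : a ≠ b) : Model A P where
  W := Fin 3
  R c x y := x = y ∨ (c = a ∧ x ≠ 0 ∧ y ≠ 0) ∨ (c = b ∧ x ≠ 2 ∧ y ≠ 2)
  equiv c := by
    refine ⟨fun x => Or.inl rfl, ?_, ?_⟩
    · rintro x y (rfl | ⟨rfl, hx, hy⟩ | ⟨rfl, hx, hy⟩)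
      · exact Or.inl rfl
      · exact Or.inr (Or.inl ⟨rfl, hy, hx⟩)
      · exact Or.inr (Or.inr ⟨rfl, hy, hx⟩)
    · rintro x y z (rfl | ⟨hca, hx, hy⟩ | ⟨hcb, hx, hy⟩)
        (rfl | ⟨hca', hy', hz⟩ | ⟨hcb', hy', hz⟩)
      · exact Or.inl rfl
      · exact Or.inr (Or.inl ⟨hca', hy', hz⟩)
      · exact Or.inr (Or.inr ⟨hcb', hy', hz⟩)
      · exact Or.inr (Or.inl ⟨hca, hx, hy⟩)
      · exact Or.inr (Or.inl ⟨hca, hx, hz⟩)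
      · exact absurd (hca.symm.trans hcb') hab
      · exact Or.inr (Or.inr ⟨hcb, hx, hy⟩)
      · exact absurd (hca'.symm.trans hcb) hab
      · exact Or.inr (Or.inr ⟨hcb, hx, hz⟩)
  V _ x := x = 1

end Aux


theorem KL_simple_single_term_unsuccessful {A P : Type} (a b : A)
    (X : List A) (Y : List (A × Bool)) (p : P)
    (hnd : (a :: (X ++ b :: Y.map Prod.fst)).Nodup) :
    ¬ successful (Form.K a (Kseq X (Form.L b (Eseq Y (.atom p))))) := by
  -- extract distinctness facts
  simp only [List.nodup_cons, List.mem_append, List.mem_cons, List.nodup_append,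
      List.Disjoint] at hnd
  push_neg at hnd
  obtain ⟨⟨haX, hab, haY⟩, _, ⟨hbY, _⟩, hdisj⟩ := hnd
  have hXa : ∀ c ∈ X, c ≠ a := fun c hc h => haX (h ▸ hc)
  have hXb : ∀ c ∈ X, c ≠ b := fun c hc h => hdisj c hc b (Or.inl rfl) h
  have hYa : ∀ c ∈ Y.map Prod.fst, c ≠ a := fun c hc h => haY (h ▸ hc)
  have hYb : ∀ c ∈ Y.map Prod.fst, c ≠ b := fun c hc h => hbY (h ▸ hc)
  set M : Model A P := cModel A P a b hab with hM
  -- eq-like facts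
  have heqX : ∀ c ∈ X, ∀ u v : M.W, M.R c u v → u = v := by
    rintro c hc u v (rfl | ⟨h, _⟩ | ⟨h, _⟩)
    · rfl
    · exact absurd h (hXa c hc)
    · exact absurd h (hXb c hc)
  have heqY : ∀ e ∈ Y, ∀ u v : M.W, M.R e.1 u v → u = v := by
    rintro e he u v (rfl | ⟨h, _⟩ | ⟨h, _⟩)
    · rfl
    · exact absurd h (hYa e.1 (List.mem_map_of_mem he))
    · exact absurd h (hYb e.1 (List.mem_map_of_mem he))
  -- characterize the inner part in M: Eseq Y (atom p) holds at w iff w = 1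
  have hχ : ∀ w : M.W, sat M w (Eseq Y (.atom p)) ↔ w = (1 : Fin 3) := fun w =>
    sat_Eseq_iff M Y _ w (heqY)
  -- φ is false at 1 and 2
  have hnot2 : ¬ sat M (2 : Fin 3) (Kseq X (Form.L b (Eseq Y (.atom p)))) := by
    refine (not_congr (sat_Kseq_iff M X _ _ heqX)).mpr ?_
    show ¬ ¬ ∀ v, M.R b (2 : Fin 3) v → ¬ sat M v (Eseq Y (.atom p))
    intro hn
    apply hn
    rintro v (rfl | ⟨h, _⟩ | ⟨_, h2, _⟩) hv
    · replace hv := (hχ _).mp hv; exact absurd hv (by decide : ¬ (2 : Fin 3) = 1)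
    · exact absurd h.symm hab
    · exact h2 rfl
  have hnot1 : ¬ sat M (1 : Fin 3) (Form.K a (Kseq X (Form.L b (Eseq Y (.atom p))))) := by
    intro h
    exact hnot2 (h (2 : Fin 3) (Or.inr (Or.inl ⟨rfl, by decide, by decide⟩)))
  -- φ is true at 0
  have h0 : sat M (0 : Fin 3) (Form.K a (Kseq X (Form.L b (Eseq Y (.atom p))))) := by
    rintro v (rfl | ⟨_, h, _⟩ | ⟨h, _⟩)
    · refine (sat_Kseq_iff M X _ _ heqX).mpr ?_
      show ¬ ∀ v, M.R b (0 : Fin 3) v → ¬ sat M v (Eseq Y (.atom p))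
      intro hn
      exact hn (1 : Fin 3) (Or.inr (Or.inr ⟨rfl, by decide, by decide⟩)) ((hχ (1 : Fin 3)).mpr rfl)
    · exact absurd rfl h
    · exact absurd h hab
  intro hsucc
  have hres := hsucc M (0 : Fin 3) h0
  set S : M.W → Prop := fun v => sat M v (Form.K a (Kseq X (Form.L b (Eseq Y (.atom p))))) with hS
  set N := M.restrict S with hN
  -- eq-like in the restricted model
  have heqX' : ∀ c ∈ X, ∀ u v : N.W, N.R c u v → u = v := by
    intro c hc u v h
    exact Subtype.ext (heqX c hc u.1 v.1 h)
  have heqY' : ∀ e ∈ Y, ∀ u v : N.W, N.R e.1 u v → u = v := by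
    intro e he u v h
    exact Subtype.ext (heqY e he u.1 v.1 h)
  -- derive a contradiction from hres
  have h1 := hres ⟨(0 : Fin 3), h0⟩ ((N.equiv a).refl _)
  replace h1 := (sat_Kseq_iff N X _ _ heqX').mp h1
  have h1' : ¬ ∀ v : N.W, N.R b ⟨(0 : Fin 3), h0⟩ v → ¬ sat N v (Eseq Y (.atom p)) := h1
  apply h1'
  intro v hr hv
  rw [sat_Eseq_iff N Y _ v heqY'] at hv
  -- hv : v.1 = 1, but S 1 is false
  have : S v.1 := v.2
  rw [hv] at this
  exact hnot1 this
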